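/- Let f : ℝ → ℝ be piecewise quadratic: f(x) = (a₁/2)x² + b₁x for x ≤ 0 and f(x) = (a₂/2)x² + b₂x for x ≥ 0 (with (a₁,b₁) and (a₂,b₂) giving the same value 0 at 0). Then f is sparsity promoting if and only if a₁ ≥ 0, a₂ ≥ 0, b₁ ≤ 0 ≤ b₂, and b₂ − b₁ > 0. -/

import Mathlib

open Set

noncomputable section

/-- Fréchet subdifferential of a function on ℝ. -/
def fsubdiffR (f : ℝ → ℝ) (x : ℝ) : Set ℝ :=
  {d | ∀ ε > (0:ℝ), ∃ δ > (0:ℝ), ∀ u, |u - x| < δ →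
    f x + d * (u - x) - ε * |u - x| ≤ f u}

/-- Moreau envelope on ℝ with parameter `α`. -/
def envR (α : ℝ) (f : ℝ → ℝ) (x : ℝ) : ℝ :=
  sInf (Set.range fun u => f u + (u - x) ^ 2 / (2 * α))

/-- Proximity operator on ℝ (as a set of minimizers). -/
def proxSetR (α : ℝ) (f : ℝ → ℝ) (x : ℝ) : Set ℝ :=
  {p | ∀ u, f p + (p - x) ^ 2 / (2 * α) ≤ f u + (u - x) ^ 2 / (2 * α)}

theorem stmt15 (a₁ b₁ a₂ b₂ : ℝ) (f : ℝ → ℝ)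
    (hf : ∀ x, f x = if x ≤ 0 then a₁ / 2 * x ^ 2 + b₁ * x
                     else a₂ / 2 * x ^ 2 + b₂ * x) :
    (f 0 = 0 ∧ (∀ x, f 0 ≤ f x) ∧ ∃ d ∈ fsubdiffR f 0, d ≠ 0) ↔
      (0 ≤ a₁ ∧ 0 ≤ a₂ ∧ b₁ ≤ 0 ∧ 0 ≤ b₂ ∧ 0 < b₂ - b₁) := by
  constructor
  · rintro ⟨hf0, hmin, d, hd, hdne⟩
    have keypos : ∀ x : ℝ, 0 < x → 0 ≤ a₂ / 2 * x ^ 2 + b₂ * x := by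
      intro x hx
      have := hmin x
      rw [hf0, hf x, if_neg (not_le.2 hx)] at this
      exact this
    have keyneg : ∀ x : ℝ, x ≤ 0 → 0 ≤ a₁ / 2 * x ^ 2 + b₁ * x := by
      intro x hx
      have := hmin x
      rw [hf0, hf x, if_pos hx] at this
      exact this
    have hb₂ : 0 ≤ b₂ := by
      by_contra h
      push_neg at h
      rcases le_or_gt a₂ 0 with ha | ha
      · have := keypos 1 one_pos
        nlinarith
      · have hx : (0:ℝ) < -b₂ / a₂ := div_pos (by linarith) ha
        have hkey := keypos (-b₂ / a₂) hx
        have hax : a₂ * (-b₂ / a₂) = -b₂ := by field_simp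
        nlinarith [mul_pos hx hx]
    have hb₁ : b₁ ≤ 0 := by
      by_contra h
      push_neg at h
      rcases le_or_gt a₁ 0 with ha | ha
      · have := keyneg (-1) (by norm_num)
        nlinarith
      · have hx : -b₁ / a₁ < 0 := by
          apply div_neg_of_neg_of_pos (by linarith) ha
        have hkey := keyneg (-b₁ / a₁) hx.le
        have hax : a₁ * (-b₁ / a₁) = -b₁ := by field_simp
        nlinarith [mul_pos_of_neg_of_neg hx hx]
    have ha₂ : 0 ≤ a₂ := by
      by_contra h
      push_neg at h
      have hx : (0:ℝ) < (2 * b₂ + 1) / (-a₂) := div_pos (by linarith) (by linarith)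
      have hkey := keypos _ hx
      have hax : a₂ * ((2 * b₂ + 1) / (-a₂)) = -(2 * b₂ + 1) := by
        have hne : a₂ ≠ 0 := ne_of_lt h
        field_simp
      nlinarith [mul_pos hx hx]
    have ha₁ : 0 ≤ a₁ := by
      by_contra h
      push_neg at h
      have hx : -((-2 * b₁ + 1) / (-a₁)) < 0 := by
        have : (0:ℝ) < (-2 * b₁ + 1) / (-a₁) := div_pos (by linarith) (by linarith)
        linarith
      have hkey := keyneg _ hx.le
      have hax : a₁ * (-((-2 * b₁ + 1) / (-a₁))) = -2 * b₁ + 1 := by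
        have hne : a₁ ≠ 0 := ne_of_lt h
        field_simp
      nlinarith [mul_pos_of_neg_of_neg hx hx]
    refine ⟨ha₁, ha₂, hb₁, hb₂, ?_⟩
    have hdle : d ≤ b₂ := by
      by_contra h
      push_neg at h
      set ε := (d - b₂) / 2 with hε
      have εpos : 0 < ε := by simp [hε]; linarith
      obtain ⟨δ, δpos, H⟩ := hd ε εpos
      set u := min (δ / 2) (ε / (|a₂| + 1)) with hu
      have upos : 0 < u := by
        apply lt_min (by linarith) (by positivity)
      have hud : |u - 0| < δ := by
        rw [sub_zero, abs_of_pos upos]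
        calc u ≤ δ / 2 := min_le_left _ _
          _ < δ := by linarith
      have := H u hud
      rw [hf0, hf u, if_neg (not_le.2 upos), sub_zero, abs_of_pos upos] at this
      have hu2 : u * (|a₂| + 1) ≤ ε := by
        rw [← le_div_iff₀ (by positivity)]
        exact min_le_right _ _
      have ha : a₂ ≤ |a₂| := le_abs_self a₂
      nlinarith [mul_pos upos upos, mul_pos upos εpos]
    have hdge : b₁ ≤ d := by
      by_contra h
      push_neg at h
      set ε := (b₁ - d) / 2 with hε
      have εpos : 0 < ε := by simp [hε]; linarith
      obtain ⟨δ, δpos, H⟩ := hd ε εpos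
      set v := min (δ / 2) (ε / (|a₁| + 1)) with hv
      have vpos : 0 < v := by
        apply lt_min (by linarith) (by positivity)
      have hud : |(-v) - 0| < δ := by
        rw [sub_zero, abs_of_neg (by linarith)]
        calc -(-v) = v := by ring
          _ ≤ δ / 2 := min_le_left _ _
          _ < δ := by linarith
      have := H (-v) hud
      rw [hf0, hf (-v), if_pos (by linarith), sub_zero,
        abs_of_neg (by linarith : (-v) < 0)] at this
      have hv2 : v * (|a₁| + 1) ≤ ε := by
        rw [← le_div_iff₀ (by positivity)]
        exact min_le_right _ _
      have ha : a₁ ≤ |a₁| := le_abs_self a₁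
      nlinarith [mul_pos vpos vpos, mul_pos vpos εpos]
    rcases lt_trichotomy d 0 with hc | hc | hc
    · linarith
    · exact absurd hc hdne
    · linarith
  · rintro ⟨ha₁, ha₂, hb₁, hb₂, hgap⟩
    have hf0 : f 0 = 0 := by rw [hf]; norm_num
    have hmin : ∀ x, f 0 ≤ f x := by
      intro x
      rw [hf0, hf x]
      split_ifs with h
      · nlinarith
      · push_neg at h
        nlinarith
    have mem : ∀ d : ℝ, b₁ ≤ d → d ≤ b₂ → d ∈ fsubdiffR f 0 := by
      intro d h1 h2 ε εpos
      refine ⟨1, one_pos, fun u _ => ?_⟩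
      rw [hf0, hf u, sub_zero]
      have habs : 0 ≤ ε * |u| := by positivity
      split_ifs with h
      · have h3 : d * u ≤ b₁ * u := by nlinarith
        nlinarith
      · push_neg at h
        have h3 : d * u ≤ b₂ * u := by nlinarith
        nlinarith
    refine ⟨hf0, hmin, ?_⟩
    rcases lt_or_ge 0 b₂ with h | h
    · exact ⟨b₂, mem b₂ (by linarith) le_rfl, by positivity⟩
    · have hb₁0 : b₁ < 0 := by linarith
      exact ⟨b₁, mem b₁ le_rfl (by linarith), ne_of_lt hb₁0⟩
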